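/- Let J be a finite set of tasks with integer release times, integer deadlines, and positive integer processing times. If J admits a feasible schedule with real starting times, then J admits a feasible schedule in which every starting time is an integer. -/

import Mathlib

/-- A task: an integer release time `r`, an integer deadline `d` (together forming the
availability interval `[r, d]`), and a processing time `len : ℕ`. -/
structure Job where
  r : ℤ
  d : ℤ
  len : ℕ

/-- A schedule `t` (real starting times) is feasible for the family of tasks `T`:
every task starts no earlier than its release time, completes no later than its deadline,
and the execution intervals `[t i, t i + len i)` are pairwise disjoint. -/
def FeasibleSchedule {ι : Type} (T : ι → Job) (t : ι → ℝ) : Prop :=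
  (∀ i, ((T i).r : ℝ) ≤ t i ∧ t i + ((T i).len : ℝ) ≤ ((T i).d : ℝ)) ∧
  Pairwise fun i j => Disjoint (Set.Ico (t i) (t i + ((T i).len : ℝ)))
    (Set.Ico (t j) (t j + ((T j).len : ℝ)))

/-- A finite set of tasks with integer release times, integer deadlines
and positive integer processing times that admits a feasible schedule with real starting
times also admits a feasible schedule with integer starting times. -/
theorem exists_integral_schedule (ι : Type) [Fintype ι] (T : ι → Job)
    (hlen : ∀ i, 1 ≤ (T i).len) (h : ∃ t : ι → ℝ, FeasibleSchedule T t) :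
    ∃ t : ι → ℝ, FeasibleSchedule T t ∧ ∀ i, ∃ z : ℤ, t i = (z : ℝ) := by

  obtain ⟨t, ht1, ht2⟩ := h
  refine ⟨fun i => (⌊t i⌋ : ℝ), ⟨fun i => ?_, fun i j hij => ?_⟩, fun i => ⟨⌊t i⌋, rfl⟩⟩
  · dsimp only
    constructor
    · exact_mod_cast Int.le_floor.2 (ht1 i).1
    · have h2 : ⌊t i + ((T i).len : ℝ)⌋ ≤ (T i).d := by
        have := Int.floor_le_floor (R := ℝ) (ht1 i).2
        simpa using this
      rw [Int.floor_add_natCast] at h2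
      exact_mod_cast h2
  · dsimp only
    have hd := ht2 hij
    dsimp only at hd
    rw [Set.Ico_disjoint_Ico] at hd ⊢
    have hi : t i < t i + ((T i).len : ℝ) := by
      have := hlen i; nlinarith [(Nat.one_le_cast (α := ℝ)).2 this]
    have hj : t j < t j + ((T j).len : ℝ) := by
      have := hlen j; nlinarith [(Nat.one_le_cast (α := ℝ)).2 this]
    have key : ∀ a b : ι, t a + ((T a).len : ℝ) ≤ t b →
        ((⌊t a⌋ : ℝ) + ((T a).len : ℝ) ≤ (⌊t b⌋ : ℝ)) := by
      intro a b hab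
      have : ⌊t a + ((T a).len : ℝ)⌋ ≤ ⌊t b⌋ := Int.floor_le_floor hab
      rw [Int.floor_add_natCast] at this
      exact_mod_cast this
    rcases min_le_iff.1 hd with h1 | h1
    · rcases le_max_iff.1 h1 with h2 | h2
      · linarith
      · have := key i j h2
        calc min ((⌊t i⌋ : ℝ) + ((T i).len : ℝ)) ((⌊t j⌋ : ℝ) + ((T j).len : ℝ))
            ≤ (⌊t i⌋ : ℝ) + ((T i).len : ℝ) := min_le_left _ _
          _ ≤ (⌊t j⌋ : ℝ) := this
          _ ≤ max _ _ := le_max_right _ _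
    · rcases le_max_iff.1 h1 with h2 | h2
      · have := key j i h2
        calc min ((⌊t i⌋ : ℝ) + ((T i).len : ℝ)) ((⌊t j⌋ : ℝ) + ((T j).len : ℝ))
            ≤ (⌊t j⌋ : ℝ) + ((T j).len : ℝ) := min_le_right _ _
          _ ≤ (⌊t i⌋ : ℝ) := this
          _ ≤ max _ _ := le_max_left _ _
      · linarith
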